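/- The k-subdivided claw (the tree obtained from the star K_{1,3} by subdividing each edge so that each of the three legs is a path of length k from the center) has path eccentricity exactly k. -/

import Mathlib

open SimpleGraph

/-- The `k`-subdivided claw: a center vertex (`none`) together with three disjoint
paths of length `k`; `some (i, j)` is the `(j+1)`-st vertex on leg `i`. -/
def subdividedClaw (k : ℕ) : SimpleGraph (Option (Fin 3 × Fin k)) :=
  SimpleGraph.fromRel (fun a b =>
    (∃ (i : Fin 3) (j : Fin k), a = none ∧ b = some (i, j) ∧ (j : ℕ) = 0) ∨
    (∃ (i : Fin 3) (j j' : Fin k), a = some (i, j) ∧ b = some (i, j') ∧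
      (j' : ℕ) = (j : ℕ) + 1))

namespace SubClawAux

variable {k : ℕ}

/-- The leg of a vertex (center gets leg `0` arbitrarily). -/
def leg : Option (Fin 3 × Fin k) → Fin 3
  | none => 0
  | some p => p.1

/-- Potential function measuring penetration into leg `i`. -/
def phi (i : Fin 3) : Option (Fin 3 × Fin k) → ℕ
  | none => 0
  | some p => if p.1 = i then (p.2 : ℕ) + 1 else 0

lemma phi_none (i : Fin 3) : phi (k := k) i none = 0 := rfl

lemma adj_phi {i : Fin 3} {a b : Option (Fin 3 × Fin k)}
    (h : (subdividedClaw k).Adj a b) : phi i a ≤ phi i b + 1 := by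
  rw [subdividedClaw, fromRel_adj] at h
  obtain ⟨-, h | h⟩ := h <;>
    rcases h with ⟨i', j, rfl, rfl, hj⟩ | ⟨i', j, j', rfl, rfl, hj⟩ <;>
      simp only [phi] <;> split <;> omega

lemma phi_le_walk {i : Fin 3} {u v : Option (Fin 3 × Fin k)}
    (w : (subdividedClaw k).Walk u v) : phi i u ≤ w.length + phi i v := by
  induction w with
  | nil => simp
  | cons h w ih =>
    have := adj_phi (i := i) h
    simp only [Walk.length_cons]
    omega

lemma leg_eq_of_adj {a b : Option (Fin 3 × Fin k)}
    (h : (subdividedClaw k).Adj a b) (ha : a ≠ none) (hb : b ≠ none) :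
    leg a = leg b := by
  rw [subdividedClaw, fromRel_adj] at h
  obtain ⟨-, h | h⟩ := h <;>
    rcases h with ⟨i', j, rfl, rfl, hj⟩ | ⟨i', j, j', rfl, rfl, hj⟩ <;>
      simp_all [leg]

lemma leg_eq_of_none_not_mem {u v : Option (Fin 3 × Fin k)}
    (w : (subdividedClaw k).Walk u v) (h : none ∉ w.support) : leg u = leg v := by
  induction w with
  | nil => rfl
  | @cons a b c h' w ih =>
    rw [Walk.support_cons, List.mem_cons] at h
    push_neg at h
    obtain ⟨h1, h2⟩ := h
    have hb : b ≠ none := fun hb => h2 (hb ▸ w.start_mem_support)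
    exact (leg_eq_of_adj h' (Ne.symm h1) hb).trans (ih h2)

/-- In a path, no vertex other than the split point lies in both the
take-part and the drop-part. -/
lemma not_mem_both {x y : Option (Fin 3 × Fin k)} {p : (subdividedClaw k).Walk x y}
    (hp : p.IsPath) {w : Option (Fin 3 × Fin k)} (hw : w ∈ p.support)
    {u : Option (Fin 3 × Fin k)}
    (h1 : u ∈ (p.takeUntil w hw).support) (h2 : u ∈ (p.dropUntil w hw).support)
    (hne : u ≠ w) : False := by
  have hnd := hp.support_nodup
  have hs := congrArg Walk.support (p.take_spec hw)
  rw [Walk.support_append] at hs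
  rw [← hs, List.nodup_append] at hnd
  have h2' : u ∈ (p.dropUntil w hw).support.tail := by
    rw [(p.dropUntil w hw).support_eq_cons, List.mem_cons] at h2
    exact h2.resolve_left hne
  exact hnd.2.2 u h1 u h2' rfl

lemma mem_take_or_drop {x y : Option (Fin 3 × Fin k)} (p : (subdividedClaw k).Walk x y)
    {w : Option (Fin 3 × Fin k)} (hw : w ∈ p.support)
    {v : Option (Fin 3 × Fin k)} (hv : v ∈ p.support) :
    v ∈ (p.takeUntil w hw).support ∨ v ∈ (p.dropUntil w hw).support := by
  have hs := congrArg Walk.support (p.take_spec hw)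
  rw [Walk.support_append] at hs
  rw [← hs, List.mem_append] at hv
  exact hv.imp id List.mem_of_mem_tail

/-- No path contains a vertex whose leg differs from that of both (non-center)
endpoints. -/
lemma no_between {u v w : Option (Fin 3 × Fin k)} {q : (subdividedClaw k).Walk u v}
    (hq : q.IsPath) (hw : w ∈ q.support)
    (hu : u ≠ none) (hv : v ≠ none) (hwn : w ≠ none)
    (h1 : leg u ≠ leg w) (h2 : leg v ≠ leg w) : False := by
  have t1 : none ∈ (q.takeUntil w hw).support := by
    by_contra h; exact h1 (leg_eq_of_none_not_mem _ h)
  have t2 : none ∈ (q.dropUntil w hw).support := by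
    by_contra h; exact h2 (leg_eq_of_none_not_mem _ h).symm
  exact not_mem_both hq hw t1 t2 (Ne.symm hwn)

lemma none_mem_of_legs_ne {u v : Option (Fin 3 × Fin k)}
    (q : (subdividedClaw k).Walk u v) (h : leg u ≠ leg v) : none ∈ q.support := by
  by_contra hn; exact h (leg_eq_of_none_not_mem q hn)

/-- A path cannot visit three distinct legs. -/
lemma three_legs {x y : Option (Fin 3 × Fin k)} {p : (subdividedClaw k).Walk x y}
    (hp : p.IsPath) {a b c : Fin 3} {ja jb jc : Fin k}
    (hab : a ≠ b) (hac : a ≠ c) (hbc : b ≠ c)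
    (ha : some (a, ja) ∈ p.support) (hb : some (b, jb) ∈ p.support)
    (hc : some (c, jc) ∈ p.support) : False := by
  set va : Option (Fin 3 × Fin k) := some (a, ja) with hva
  set vb : Option (Fin 3 × Fin k) := some (b, jb) with hvb
  set vc : Option (Fin 3 × Fin k) := some (c, jc) with hvc
  have lega : leg va = a := rfl
  have legb : leg vb = b := rfl
  have legc : leg vc = c := rfl
  -- split p at va
  rcases mem_take_or_drop p ha hb with hb1 | hb2
  · -- vb in take-part  q1 : x → va
    set q1 := p.takeUntil va ha with hq1
    have hq1p : q1.IsPath := hp.takeUntil ha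
    rcases mem_take_or_drop p ha hc with hc1 | hc2
    · -- vb, vc both in q1 : x → va; split q1 at vb
      rcases mem_take_or_drop q1 hb1 hc1 with hcr | hcr
      · -- vc in x → vb part r1; none in r1 (between vc and vb) and in r2 (vb→va)
        have n1 : none ∈ (q1.takeUntil vb hb1).support := by
          have := none_mem_of_legs_ne ((q1.takeUntil vb hb1).dropUntil vc hcr)
            (by rw [legc, legb]; exact hbc.symm)
          exact Walk.support_dropUntil_subset _ _ this
        have n2 : none ∈ (q1.dropUntil vb hb1).support :=
          none_mem_of_legs_ne (q1.dropUntil vb hb1) (by rw [legb, lega]; exact hab.symm)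
        exact not_mem_both hq1p hb1 n1 n2 (by simp [hvb])
      · -- vc in vb → va part r2; apply no_between
        exact no_between (hq1p.dropUntil hb1) hcr (by simp [hvb]) (by simp [hva])
          (by simp [hvc]) (by rw [legb, legc]; exact hbc)
          (by rw [lega, legc]; exact hac)
    · -- vb in q1 (x→va), vc in q2 (va→y)
      set q2 := p.dropUntil va ha with hq2
      have n1 : none ∈ q1.support := by
        have := none_mem_of_legs_ne (q1.dropUntil vb hb1)
          (by rw [legb, lega]; exact hab.symm)
        exact Walk.support_dropUntil_subset _ _ this
      have n2 : none ∈ q2.support := by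
        have := none_mem_of_legs_ne (q2.takeUntil vc hc2)
          (by rw [lega, legc]; exact hac)
        exact Walk.support_takeUntil_subset _ _ this
      exact not_mem_both hp ha n1 n2 (by simp [hva])
  · -- vb in drop-part q2 : va → y
    set q2 := p.dropUntil va ha with hq2
    have hq2p : q2.IsPath := hp.dropUntil ha
    rcases mem_take_or_drop p ha hc with hc1 | hc2
    · -- vc in q1 (x→va), vb in q2 (va→y)
      set q1 := p.takeUntil va ha with hq1
      have n1 : none ∈ q1.support := by
        have := none_mem_of_legs_ne (q1.dropUntil vc hc1)
          (by rw [legc, lega]; exact hac.symm)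
        exact Walk.support_dropUntil_subset _ _ this
      have n2 : none ∈ q2.support := by
        have := none_mem_of_legs_ne (q2.takeUntil vb hb2)
          (by rw [lega, legb]; exact hab)
        exact Walk.support_takeUntil_subset _ _ this
      exact not_mem_both hp ha n1 n2 (by simp [hva])
    · -- vb, vc both in q2 : va → y; split q2 at vb
      rcases mem_take_or_drop q2 hb2 hc2 with hcr | hcr
      · -- vc in va → vb part: apply no_between
        exact no_between (hq2p.takeUntil hb2) hcr (by simp [hva]) (by simp [hvb])
          (by simp [hvc]) (by rw [lega, legc]; exact hac)
          (by rw [legb, legc]; exact hbc)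
      · -- vc in vb → y part; none between va,vb and between vb,vc
        have n1 : none ∈ (q2.takeUntil vb hb2).support :=
          none_mem_of_legs_ne (q2.takeUntil vb hb2) (by rw [lega, legb]; exact hab)
        have n2 : none ∈ (q2.dropUntil vb hb2).support := by
          have := none_mem_of_legs_ne ((q2.dropUntil vb hb2).takeUntil vc hcr)
            (by rw [legb, legc]; exact hbc)
          exact Walk.support_takeUntil_subset _ _ this
        exact not_mem_both hq2p hb2 n1 n2 (by simp [hvb])

/-- Walk from the `j`-th vertex of leg `i` down to the center. -/
def legWalk (k : ℕ) (i : Fin 3) : (j : ℕ) → (h : j < k) →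
    (subdividedClaw k).Walk (some (i, ⟨j, h⟩)) none
  | 0, h => Walk.cons
      (by
        rw [subdividedClaw, fromRel_adj]
        exact ⟨by simp, Or.inr (Or.inl ⟨i, ⟨0, h⟩, rfl, rfl, rfl⟩)⟩)
      Walk.nil
  | j + 1, h => Walk.cons
      (by
        rw [subdividedClaw, fromRel_adj]
        refine ⟨by simp [Fin.ext_iff], Or.inr (Or.inr ⟨i, ⟨j, Nat.lt_of_succ_lt h⟩,
          ⟨j + 1, h⟩, rfl, rfl, rfl⟩)⟩)
      (legWalk k i j (Nat.lt_of_succ_lt h))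

lemma legWalk_length (k : ℕ) (i : Fin 3) (j : ℕ) (h : j < k) :
    (legWalk k i j h).length = j + 1 := by
  induction j with
  | zero => rfl
  | succ n ih => simp [legWalk, ih]

lemma reach_none (u : Option (Fin 3 × Fin k)) :
    (subdividedClaw k).Reachable u none := by
  match u with
  | none => exact Reachable.refl _
  | some (i, ⟨j, hj⟩) => exact ⟨legWalk k i j hj⟩

end SubClawAux

open SubClawAux in
/-- The `k`-subdivided claw has path eccentricity exactly `k`: some path has
eccentricity at most `k`, and every path has eccentricity at least `k`. -/
theorem subdividedClaw_pathEcc (k : ℕ) (hk : 1 ≤ k) :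
    (∃ (x y : Option (Fin 3 × Fin k)) (p : (subdividedClaw k).Walk x y), p.IsPath ∧
      ∀ u, ∃ v ∈ p.support, (subdividedClaw k).dist u v ≤ k) ∧
    (∀ (x y : Option (Fin 3 × Fin k)) (p : (subdividedClaw k).Walk x y), p.IsPath →
      ∃ u, ∀ v ∈ p.support, k ≤ (subdividedClaw k).dist u v) := by
  constructor
  · -- the one-vertex path at the center has eccentricity ≤ k
    refine ⟨none, none, Walk.nil, Walk.IsPath.nil, fun u => ⟨none, by simp, ?_⟩⟩
    match u with
    | none => rw [SimpleGraph.dist_self]; exact Nat.zero_le k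
    | some (i, ⟨j, hj⟩) =>
      calc (subdividedClaw k).dist (some (i, ⟨j, hj⟩)) none ≤ (legWalk k i j hj).length :=
            dist_le _
        _ = j + 1 := legWalk_length k i j hj
        _ ≤ k := hj
  · intro x y p hp
    -- find a leg untouched by p
    obtain ⟨i, hi⟩ : ∃ i : Fin 3, ∀ j : Fin k, some (i, j) ∉ p.support := by
      by_contra h
      push_neg at h
      obtain ⟨j0, h0⟩ := h 0
      obtain ⟨j1, h1⟩ := h 1
      obtain ⟨j2, h2⟩ := h 2
      exact three_legs hp (a := 0) (b := 1) (c := 2)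
        (by decide) (by decide) (by decide) h0 h1 h2
    refine ⟨some (i, ⟨k - 1, by omega⟩), fun v hv => ?_⟩
    have hphiv : phi i v = 0 := by
      match v with
      | none => rfl
      | some (i', j') =>
        by_cases hii : i' = i
        · subst hii; exact absurd hv (hi j')
        · simp [phi, hii]
    have hreach : (subdividedClaw k).Reachable (some (i, ⟨k - 1, by omega⟩)) v :=
      (reach_none _).trans (reach_none v).symm
    obtain ⟨w, hw⟩ := hreach.exists_walk_length_eq_dist
    have := phi_le_walk (i := i) w
    have hphiu : phi i (some (i, (⟨k - 1, by omega⟩ : Fin k))) = k := by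
      simp [phi]; omega
    omega
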